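/- Two simple contractions with the same domain X(G) are range equivalent if and only if they have the same characteristic, and every characteristic map of R into G is the characteristic of some simple contraction with domain X(G). -/

import Mathlib

open scoped Classical

/-- A directed multigraph. -/
structure MultiDigraph where
  V : Type
  E : Type
  s : E → V
  t : E → V

/-- An isomorphism of directed multigraphs. -/
structure DigraphIso (G H : MultiDigraph) where
  vEquiv : G.V ≃ H.V
  eEquiv : G.E ≃ H.E
  map_s : ∀ e, H.s (eEquiv e) = vEquiv (G.s e)
  map_t : ∀ e, H.t (eEquiv e) = vEquiv (G.t e)

/-- An edge replacement rule `e → R`: a replacement graph `R` with distinguished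
(distinct) initial and terminal vertices. -/
structure ReplacementRule where
  R : MultiDigraph
  init : R.V
  term : R.V
  ne : init ≠ term

/-- The simple expansion `G ◁ e₀` of `G` at the edge `e₀`: remove `e₀` and paste in
a copy of the replacement graph `R`, attaching its initial and terminal vertices to
the endpoints of `e₀`. -/
noncomputable def SimpleExpansion (Rr : ReplacementRule) (G : MultiDigraph) (e₀ : G.E) :
    MultiDigraph where
  V := G.V ⊕ {v : Rr.R.V // v ≠ Rr.init ∧ v ≠ Rr.term}
  E := {e : G.E // e ≠ e₀} ⊕ Rr.R.E
  s := fun e =>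
    match e with
    | .inl e => .inl (G.s e.1)
    | .inr ε =>
      if h1 : Rr.R.s ε = Rr.init then .inl (G.s e₀)
      else if h2 : Rr.R.s ε = Rr.term then .inl (G.t e₀)
      else .inr ⟨Rr.R.s ε, h1, h2⟩
  t := fun e =>
    match e with
    | .inl e => .inl (G.t e.1)
    | .inr ε =>
      if h1 : Rr.R.t ε = Rr.init then .inl (G.s e₀)
      else if h2 : Rr.R.t ε = Rr.term then .inl (G.t e₀)
      else .inr ⟨Rr.R.t ε, h1, h2⟩

/-- A characteristic map for `R` (or `R_loop`) in `G`: an isomorphism from `R`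
(allowing the initial and terminal vertices to be identified, which is the
`R_loop` case) onto a subgraph `S` of `G` such that every edge of `G` incident to
the image of an interior vertex of `R` lies in `S`. -/
structure CharMap (Rr : ReplacementRule) (G : MultiDigraph) where
  vMap : Rr.R.V → G.V
  eMap : Rr.R.E → G.E
  map_s : ∀ ε, G.s (eMap ε) = vMap (Rr.R.s ε)
  map_t : ∀ ε, G.t (eMap ε) = vMap (Rr.R.t ε)
  eInj : Function.Injective eMap
  vInj : ∀ u v, vMap u = vMap v → u = v ∨
    (u = Rr.init ∧ v = Rr.term) ∨ (u = Rr.term ∧ v = Rr.init)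
  full : ∀ v : Rr.R.V, v ≠ Rr.init → v ≠ Rr.term →
    ∀ e : G.E, (G.s e = vMap v ∨ G.t e = vMap v) → ∃ ε, eMap ε = e

/-- A simple contraction with domain `X(G)`: the inverse of a simple expansion
morphism, recorded by its graph pair diagram `(G, G′ ◁ e₀, φ)`. -/
structure SimpleContraction (Rr : ReplacementRule) (G : MultiDigraph) where
  G' : MultiDigraph
  e₀ : G'.E
  φ : DigraphIso G (SimpleExpansion Rr G' e₀)

/-- The characteristic of a simple contraction: the edge `ε` of `R` is sent to
`φ⁻¹(e₀ε)`, and correspondingly on vertices. -/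
noncomputable def SimpleContraction.char {Rr : ReplacementRule} {G : MultiDigraph}
    (c : SimpleContraction Rr G) : CharMap Rr G where
  vMap := fun v =>
    if h1 : v = Rr.init then c.φ.vEquiv.symm (.inl (c.G'.s c.e₀))
    else if h2 : v = Rr.term then c.φ.vEquiv.symm (.inl (c.G'.t c.e₀))
    else c.φ.vEquiv.symm (.inr ⟨v, h1, h2⟩)
  eMap := fun ε => c.φ.eEquiv.symm (.inr ε)
  map_s := by
    intro ε
    have h := c.φ.map_s (c.φ.eEquiv.symm (.inr ε))
    erw [Equiv.apply_symm_apply] at h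
    have h2 : G.s (c.φ.eEquiv.symm (.inr ε))
        = c.φ.vEquiv.symm ((SimpleExpansion Rr c.G' c.e₀).s (.inr ε)) := by
      rw [h, Equiv.symm_apply_apply]
    rw [h2]
    by_cases h1 : Rr.R.s ε = Rr.init
    · simp [SimpleExpansion, h1]
    · by_cases h2' : Rr.R.s ε = Rr.term <;>
        simp [SimpleExpansion, h1, h2', Rr.ne.symm]
  map_t := by
    intro ε
    have h := c.φ.map_t (c.φ.eEquiv.symm (.inr ε))
    erw [Equiv.apply_symm_apply] at h
    have h2 : G.t (c.φ.eEquiv.symm (.inr ε))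
        = c.φ.vEquiv.symm ((SimpleExpansion Rr c.G' c.e₀).t (.inr ε)) := by
      rw [h, Equiv.symm_apply_apply]
    rw [h2]
    by_cases h1 : Rr.R.t ε = Rr.init
    · simp [SimpleExpansion, h1]
    · by_cases h2' : Rr.R.t ε = Rr.term <;>
        simp [SimpleExpansion, h1, h2', Rr.ne.symm]
  eInj := by
    intro a b hab
    have := c.φ.eEquiv.symm.injective hab
    exact Sum.inr_injective this
  vInj := by
    intro u v h
    try simp only at h
    by_cases hu1 : u = Rr.init
    · by_cases hv1 : v = Rr.init
      · exact Or.inl (hu1.trans hv1.symm)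
      · by_cases hv2 : v = Rr.term
        · exact Or.inr (Or.inl ⟨hu1, hv2⟩)
        · exfalso
          rw [dif_pos hu1, dif_neg hv1, dif_neg hv2] at h
          have := c.φ.vEquiv.symm.injective h
          simp at this
    · by_cases hu2 : u = Rr.term
      · by_cases hv2 : v = Rr.term
        · exact Or.inl (hu2.trans hv2.symm)
        · by_cases hv1 : v = Rr.init
          · exact Or.inr (Or.inr ⟨hu2, hv1⟩)
          · exfalso
            rw [dif_neg hu1, dif_pos hu2, dif_neg hv1, dif_neg hv2] at h
            have := c.φ.vEquiv.symm.injective h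
            simp at this
      · by_cases hv1 : v = Rr.init
        · exfalso
          rw [dif_neg hu1, dif_neg hu2, dif_pos hv1] at h
          have := c.φ.vEquiv.symm.injective h
          simp at this
        · by_cases hv2 : v = Rr.term
          · exfalso
            rw [dif_neg hu1, dif_neg hu2, dif_neg hv1, dif_pos hv2] at h
            have := c.φ.vEquiv.symm.injective h
            simp at this
          · rw [dif_neg hu1, dif_neg hu2, dif_neg hv1, dif_neg hv2] at h
            have := c.φ.vEquiv.symm.injective h
            exact Or.inl (congrArg Subtype.val (Sum.inr_injective this))
  full := by
    intro v hv1 hv2 e he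
    rcases hEe : c.φ.eEquiv e with e' | ε
    · exfalso
      rcases he with he | he
      · have h := c.φ.map_s e
        rw [hEe] at h
        -- h : (Exp).s (.inl e') = φ.vEquiv (G.s e)
        rw [he] at h
        simp only [SimpleExpansion, dif_neg hv1, dif_neg hv2, Equiv.apply_symm_apply] at h
        exact (by erw [Equiv.apply_symm_apply] at h; simp at h)
      · have h := c.φ.map_t e
        rw [hEe] at h
        rw [he] at h
        simp only [SimpleExpansion, dif_neg hv1, dif_neg hv2, Equiv.apply_symm_apply] at h
        exact (by erw [Equiv.apply_symm_apply] at h; simp at h)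
    · refine ⟨ε, ?_⟩
      show c.φ.eEquiv.symm (Sum.inr ε) = e
      rw [← hEe, Equiv.symm_apply_apply]

/-- Two simple contractions `c₁, c₂` with domain `X(G)` are range equivalent, i.e.
`c₂ = φ ∘ c₁` for a base isomorphism `φ`: there is an isomorphism
`ψ : G₁′ → G₂′` carrying the contracted edge of one diagram to that of the other
and compatible with the two diagram isomorphisms. -/
def RangeEquiv {Rr : ReplacementRule} {G : MultiDigraph}
    (c₁ c₂ : SimpleContraction Rr G) : Prop :=
  ∃ ψ : DigraphIso c₁.G' c₂.G',
    ψ.eEquiv c₁.e₀ = c₂.e₀ ∧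
    (∀ e : G.E,
      (∀ (e' : c₁.G'.E) (h : e' ≠ c₁.e₀), c₁.φ.eEquiv e = .inl ⟨e', h⟩ →
        ∃ h₂ : ψ.eEquiv e' ≠ c₂.e₀, c₂.φ.eEquiv e = .inl ⟨ψ.eEquiv e', h₂⟩) ∧
      (∀ ε : Rr.R.E, c₁.φ.eEquiv e = .inr ε → c₂.φ.eEquiv e = .inr ε)) ∧
    (∀ v : G.V,
      (∀ w : c₁.G'.V, c₁.φ.vEquiv v = .inl w → c₂.φ.vEquiv v = .inl (ψ.vEquiv w)) ∧
      (∀ w : {v : Rr.R.V // v ≠ Rr.init ∧ v ≠ Rr.term},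
        c₁.φ.vEquiv v = .inr w → c₂.φ.vEquiv v = .inr w))

/-! ### Auxiliary material for `stmt_14` -/

/-- Extensionality for characteristic maps: they are determined by their
vertex and edge maps. -/
lemma CharMap.ext' {Rr : ReplacementRule} {G : MultiDigraph} {χ₁ χ₂ : CharMap Rr G}
    (hv : χ₁.vMap = χ₂.vMap) (he : χ₁.eMap = χ₂.eMap) : χ₁ = χ₂ := by
  cases χ₁; cases χ₂; dsimp at hv he; subst hv; subst he; rfl

/-- Extract the left component of a sum known not to be a right injection. -/
def getL {α β : Type} (x : α ⊕ β) (h : ∀ b, x ≠ Sum.inr b) : α :=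
  match x with
  | .inl a => a
  | .inr b => absurd rfl (h b)

lemma getL_spec {α β : Type} (x : α ⊕ β) (h : ∀ b, x ≠ Sum.inr b) :
    x = .inl (getL x h) := by
  match x with
  | .inl a => rfl
  | .inr b => exact absurd rfl (h b)

lemma getL_eq {α β : Type} {x : α ⊕ β} {h : ∀ b, x ≠ Sum.inr b} {a : α}
    (hx : x = Sum.inl a) : getL x h = a := by
  subst hx; rfl

section CharValues

variable {Rr : ReplacementRule} {G : MultiDigraph} (c : SimpleContraction Rr G)

lemma char_vMap_init :
    c.char.vMap Rr.init = c.φ.vEquiv.symm (.inl (c.G'.s c.e₀)) := by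
  simp [SimpleContraction.char]

lemma char_vMap_term :
    c.char.vMap Rr.term = c.φ.vEquiv.symm (.inl (c.G'.t c.e₀)) := by
  simp [SimpleContraction.char, Rr.ne.symm]

lemma char_vMap_int (v : Rr.R.V) (h1 : v ≠ Rr.init) (h2 : v ≠ Rr.term) :
    c.char.vMap v = c.φ.vEquiv.symm (.inr ⟨v, h1, h2⟩) := by
  simp [SimpleContraction.char, h1, h2]

lemma char_eMap (ε : Rr.R.E) :
    c.char.eMap ε = c.φ.eEquiv.symm (.inr ε) := rfl

end CharValues

lemma st14_forward {Rr : ReplacementRule} {G : MultiDigraph}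
    (c₁ c₂ : SimpleContraction Rr G) (h : RangeEquiv c₁ c₂) :
    c₁.char = c₂.char := by
  obtain ⟨ψ, hψ, hE, hV⟩ := h
  apply CharMap.ext'
  · funext v
    by_cases h1 : v = Rr.init
    · subst h1
      rw [char_vMap_init, char_vMap_init]
      set x := c₁.φ.vEquiv.symm (.inl (c₁.G'.s c₁.e₀)) with hx
      have hx1 : c₁.φ.vEquiv x = .inl (c₁.G'.s c₁.e₀) := by
        erw [hx, Equiv.apply_symm_apply]
      have h2 := (hV x).1 _ hx1
      have hs : ψ.vEquiv (c₁.G'.s c₁.e₀) = c₂.G'.s c₂.e₀ := by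
        have := ψ.map_s c₁.e₀; rw [hψ] at this; exact this.symm
      rw [hs] at h2
      rw [← h2, Equiv.symm_apply_apply]
    · by_cases h2 : v = Rr.term
      · subst h2
        rw [char_vMap_term, char_vMap_term]
        set x := c₁.φ.vEquiv.symm (.inl (c₁.G'.t c₁.e₀)) with hx
        have hx1 : c₁.φ.vEquiv x = .inl (c₁.G'.t c₁.e₀) := by
          erw [hx, Equiv.apply_symm_apply]
        have h2 := (hV x).1 _ hx1
        have hs : ψ.vEquiv (c₁.G'.t c₁.e₀) = c₂.G'.t c₂.e₀ := by
          have := ψ.map_t c₁.e₀; rw [hψ] at this; exact this.symm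
        rw [hs] at h2
        rw [← h2, Equiv.symm_apply_apply]
      · rw [char_vMap_int c₁ v h1 h2, char_vMap_int c₂ v h1 h2]
        set x := c₁.φ.vEquiv.symm (.inr ⟨v, h1, h2⟩) with hx
        have hx1 : c₁.φ.vEquiv x = .inr ⟨v, h1, h2⟩ := by
          erw [hx, Equiv.apply_symm_apply]
        have h3 := (hV x).2 _ hx1
        rw [← h3, Equiv.symm_apply_apply]
  · funext ε
    rw [char_eMap, char_eMap]
    set x := c₁.φ.eEquiv.symm (.inr ε) with hx
    have hx1 : c₁.φ.eEquiv x = .inr ε := by erw [hx, Equiv.apply_symm_apply]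
    have h2 := (hE x).2 _ hx1
    rw [← h2, Equiv.symm_apply_apply]

section Backward

variable {Rr : ReplacementRule} {G : MultiDigraph} (c₁ c₂ : SimpleContraction Rr G)

lemma bk_hee (h : c₁.char = c₂.char) (ε : Rr.R.E) :
    c₁.φ.eEquiv.symm (Sum.inr ε) = c₂.φ.eEquiv.symm (Sum.inr ε) := by
  rw [← char_eMap, ← char_eMap, h]

lemma bk_hvinit (h : c₁.char = c₂.char) :
    c₁.φ.vEquiv.symm (Sum.inl (c₁.G'.s c₁.e₀)) =
      c₂.φ.vEquiv.symm (Sum.inl (c₂.G'.s c₂.e₀)) := by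
  rw [← char_vMap_init, ← char_vMap_init, h]

lemma bk_hvterm (h : c₁.char = c₂.char) :
    c₁.φ.vEquiv.symm (Sum.inl (c₁.G'.t c₁.e₀)) =
      c₂.φ.vEquiv.symm (Sum.inl (c₂.G'.t c₂.e₀)) := by
  rw [← char_vMap_term, ← char_vMap_term, h]

lemma bk_hvint (h : c₁.char = c₂.char)
    (u : {v : Rr.R.V // v ≠ Rr.init ∧ v ≠ Rr.term}) :
    c₁.φ.vEquiv.symm (Sum.inr u) = c₂.φ.vEquiv.symm (Sum.inr u) := by
  have h1 := char_vMap_int c₁ u.1 u.2.1 u.2.2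
  have h2 := char_vMap_int c₂ u.1 u.2.1 u.2.2
  rw [← h1, ← h2, h]

lemma bk_keyV (h : c₁.char = c₂.char) (w : c₁.G'.V) :
    ∀ u, c₂.φ.vEquiv (c₁.φ.vEquiv.symm (Sum.inl w)) ≠ Sum.inr u := by
  intro u hu
  have h1 : c₁.φ.vEquiv.symm (Sum.inl w) = c₂.φ.vEquiv.symm (Sum.inr u) := by
    rw [← hu, Equiv.symm_apply_apply]
  rw [← bk_hvint c₁ c₂ h u] at h1
  have := c₁.φ.vEquiv.symm.injective h1
  simp at this

lemma bk_keyE (h : c₁.char = c₂.char) (p : {e : c₁.G'.E // e ≠ c₁.e₀}) :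
    ∀ ε, c₂.φ.eEquiv (c₁.φ.eEquiv.symm (Sum.inl p)) ≠ Sum.inr ε := by
  intro ε hε
  have h1 : c₁.φ.eEquiv.symm (Sum.inl p) = c₂.φ.eEquiv.symm (Sum.inr ε) := by
    rw [← hε, Equiv.symm_apply_apply]
  rw [← bk_hee c₁ c₂ h ε] at h1
  have := c₁.φ.eEquiv.symm.injective h1
  simp at this

/-- Vertex map of the base isomorphism. -/
noncomputable def bk_vF (h : c₁.char = c₂.char) (w : c₁.G'.V) : c₂.G'.V :=
  getL _ (bk_keyV c₁ c₂ h w)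

lemma bk_vF_spec (h : c₁.char = c₂.char) (w : c₁.G'.V) :
    c₂.φ.vEquiv (c₁.φ.vEquiv.symm (Sum.inl w)) = Sum.inl (bk_vF c₁ c₂ h w) :=
  getL_spec _ _

lemma bk_vGF (h : c₁.char = c₂.char) (h' : c₂.char = c₁.char) (w : c₁.G'.V) :
    bk_vF c₂ c₁ h' (bk_vF c₁ c₂ h w) = w := by
  apply getL_eq
  erw [← bk_vF_spec c₁ c₂ h w, Equiv.symm_apply_apply, Equiv.apply_symm_apply]

/-- Edge map of the base isomorphism, on non-contracted edges. -/
noncomputable def bk_eF0 (h : c₁.char = c₂.char) (p : {e : c₁.G'.E // e ≠ c₁.e₀}) :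
    {e : c₂.G'.E // e ≠ c₂.e₀} :=
  getL _ (bk_keyE c₁ c₂ h p)

lemma bk_eF0_spec (h : c₁.char = c₂.char) (p : {e : c₁.G'.E // e ≠ c₁.e₀}) :
    c₂.φ.eEquiv (c₁.φ.eEquiv.symm (Sum.inl p)) = Sum.inl (bk_eF0 c₁ c₂ h p) :=
  getL_spec _ _

/-- Edge map of the base isomorphism. -/
noncomputable def bk_eF (h : c₁.char = c₂.char) (e : c₁.G'.E) : c₂.G'.E :=
  if he : e = c₁.e₀ then c₂.e₀ else (bk_eF0 c₁ c₂ h ⟨e, he⟩).1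

lemma bk_eF_e₀ (h : c₁.char = c₂.char) : bk_eF c₁ c₂ h c₁.e₀ = c₂.e₀ := by
  simp [bk_eF]

lemma bk_eF_ne (h : c₁.char = c₂.char) (e : c₁.G'.E) (he : e ≠ c₁.e₀) :
    bk_eF c₁ c₂ h e = (bk_eF0 c₁ c₂ h ⟨e, he⟩).1 := by
  simp [bk_eF, he]

lemma bk_eGF (h : c₁.char = c₂.char) (h' : c₂.char = c₁.char) (e : c₁.G'.E) :
    bk_eF c₂ c₁ h' (bk_eF c₁ c₂ h e) = e := by
  by_cases he : e = c₁.e₀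
  · subst he; rw [bk_eF_e₀, bk_eF_e₀]
  · rw [bk_eF_ne c₁ c₂ h e he, bk_eF_ne c₂ c₁ h' _ (bk_eF0 c₁ c₂ h ⟨e, he⟩).2]
    have : bk_eF0 c₂ c₁ h' ⟨(bk_eF0 c₁ c₂ h ⟨e, he⟩).1, (bk_eF0 c₁ c₂ h ⟨e, he⟩).2⟩
        = ⟨e, he⟩ := by
      apply Subtype.ext
      have hg : (bk_eF0 c₂ c₁ h' ⟨(bk_eF0 c₁ c₂ h ⟨e, he⟩).1,
          (bk_eF0 c₁ c₂ h ⟨e, he⟩).2⟩ : {e : c₁.G'.E // e ≠ c₁.e₀}) = ⟨e, he⟩ := by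
        have := bk_eF0_spec c₂ c₁ h' ⟨(bk_eF0 c₁ c₂ h ⟨e, he⟩).1,
          (bk_eF0 c₁ c₂ h ⟨e, he⟩).2⟩
        erw [show (⟨(bk_eF0 c₁ c₂ h ⟨e, he⟩).1, (bk_eF0 c₁ c₂ h ⟨e, he⟩).2⟩ :
            {e : c₂.G'.E // e ≠ c₂.e₀}) = bk_eF0 c₁ c₂ h ⟨e, he⟩ from rfl,
          ← bk_eF0_spec c₁ c₂ h ⟨e, he⟩, Equiv.symm_apply_apply,
          Equiv.apply_symm_apply] at this
        exact (Sum.inl_injective this).symm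
      rw [hg]
    rw [this]

lemma bk_map_s (h : c₁.char = c₂.char) (e : c₁.G'.E) :
    c₂.G'.s (bk_eF c₁ c₂ h e) = bk_vF c₁ c₂ h (c₁.G'.s e) := by
  by_cases he : e = c₁.e₀
  · subst he
    rw [bk_eF_e₀]
    symm; apply getL_eq
    erw [bk_hvinit c₁ c₂ h, Equiv.apply_symm_apply]
  · rw [bk_eF_ne c₁ c₂ h e he]
    set p : {e : c₁.G'.E // e ≠ c₁.e₀} := ⟨e, he⟩ with hp
    set x := c₁.φ.eEquiv.symm (Sum.inl p) with hx
    have h1 := c₁.φ.map_s x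
    erw [hx, Equiv.apply_symm_apply] at h1
    -- h1 : (SimpleExpansion Rr c₁.G' c₁.e₀).s (Sum.inl p) = c₁.φ.vEquiv (G.s x)
    have h1' : c₁.φ.vEquiv (G.s x) = Sum.inl (c₁.G'.s e) := h1.symm
    have h2 := c₂.φ.map_s x
    rw [hx, bk_eF0_spec c₁ c₂ h p] at h2
    -- h2 : (SimpleExpansion Rr c₂.G' c₂.e₀).s (Sum.inl (bk_eF0 c₁ c₂ h p))
    --        = c₂.φ.vEquiv (G.s x)
    have h2' : c₂.φ.vEquiv (G.s x) = Sum.inl (c₂.G'.s (bk_eF0 c₁ c₂ h p).1) := h2.symm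
    symm; apply getL_eq
    have : c₁.φ.vEquiv.symm (Sum.inl (c₁.G'.s e)) = G.s x := by
      rw [← h1', Equiv.symm_apply_apply]
    rw [this, h2']

lemma bk_map_t (h : c₁.char = c₂.char) (e : c₁.G'.E) :
    c₂.G'.t (bk_eF c₁ c₂ h e) = bk_vF c₁ c₂ h (c₁.G'.t e) := by
  by_cases he : e = c₁.e₀
  · subst he
    rw [bk_eF_e₀]
    symm; apply getL_eq
    erw [bk_hvterm c₁ c₂ h, Equiv.apply_symm_apply]
  · rw [bk_eF_ne c₁ c₂ h e he]
    set p : {e : c₁.G'.E // e ≠ c₁.e₀} := ⟨e, he⟩ with hp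
    set x := c₁.φ.eEquiv.symm (Sum.inl p) with hx
    have h1 := c₁.φ.map_t x
    erw [hx, Equiv.apply_symm_apply] at h1
    have h1' : c₁.φ.vEquiv (G.t x) = Sum.inl (c₁.G'.t e) := h1.symm
    have h2 := c₂.φ.map_t x
    rw [hx, bk_eF0_spec c₁ c₂ h p] at h2
    have h2' : c₂.φ.vEquiv (G.t x) = Sum.inl (c₂.G'.t (bk_eF0 c₁ c₂ h p).1) := h2.symm
    symm; apply getL_eq
    have : c₁.φ.vEquiv.symm (Sum.inl (c₁.G'.t e)) = G.t x := by
      rw [← h1', Equiv.symm_apply_apply]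
    rw [this, h2']

lemma st14_backward (h : c₁.char = c₂.char) : RangeEquiv c₁ c₂ := by
  refine ⟨⟨⟨bk_vF c₁ c₂ h, bk_vF c₂ c₁ h.symm, bk_vGF c₁ c₂ h h.symm,
      bk_vGF c₂ c₁ h.symm h⟩,
    ⟨bk_eF c₁ c₂ h, bk_eF c₂ c₁ h.symm, bk_eGF c₁ c₂ h h.symm,
      bk_eGF c₂ c₁ h.symm h⟩,
    bk_map_s c₁ c₂ h, bk_map_t c₁ c₂ h⟩, bk_eF_e₀ c₁ c₂ h, ?_, ?_⟩
  · intro e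
    constructor
    · intro e' he' hφ
      have hx : c₁.φ.eEquiv.symm (Sum.inl ⟨e', he'⟩) = e := by
        rw [hφ.symm, Equiv.symm_apply_apply]
      have hs := bk_eF0_spec c₁ c₂ h ⟨e', he'⟩
      rw [hx] at hs
      have hred : bk_eF c₁ c₂ h e' = (bk_eF0 c₁ c₂ h ⟨e', he'⟩).1 :=
        bk_eF_ne c₁ c₂ h e' he'
      show ∃ h₂ : bk_eF c₁ c₂ h e' ≠ c₂.e₀,
        c₂.φ.eEquiv e = Sum.inl ⟨bk_eF c₁ c₂ h e', h₂⟩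
      refine ⟨by rw [hred]; exact (bk_eF0 c₁ c₂ h ⟨e', he'⟩).2, ?_⟩
      rw [hs]
      congr 1
      apply Subtype.ext
      exact hred.symm
    · intro ε hφ
      have hx : e = c₁.φ.eEquiv.symm (Sum.inr ε) := by
        rw [← hφ, Equiv.symm_apply_apply]
      erw [hx, bk_hee c₁ c₂ h ε, Equiv.apply_symm_apply]
  · intro v
    constructor
    · intro w hφ
      have hx : c₁.φ.vEquiv.symm (Sum.inl w) = v := by
        rw [← hφ, Equiv.symm_apply_apply]
      have := bk_vF_spec c₁ c₂ h w
      rw [hx] at this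
      exact this
    · intro w hφ
      have hx : v = c₁.φ.vEquiv.symm (Sum.inr w) := by
        rw [← hφ, Equiv.symm_apply_apply]
      erw [hx, bk_hvint c₁ c₂ h w, Equiv.apply_symm_apply]

end Backward

section Exist

variable (Rr : ReplacementRule) (G : MultiDigraph) (χ : CharMap Rr G)

/-- `v` is the image of an interior vertex of `R`. -/
def xIsInt (v : G.V) : Prop :=
  ∃ w : Rr.R.V, (w ≠ Rr.init ∧ w ≠ Rr.term) ∧ χ.vMap w = v

/-- `e` is the image of an edge of `R`. -/
def xInIm (e : G.E) : Prop := ∃ ε, χ.eMap ε = e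

variable {Rr G χ}

lemma xint_unique {u w : Rr.R.V} (hu : u ≠ Rr.init ∧ u ≠ Rr.term)
    (hw : w ≠ Rr.init ∧ w ≠ Rr.term) (h : χ.vMap u = χ.vMap w) : u = w := by
  rcases χ.vInj u w h with h' | ⟨h1, h2⟩ | ⟨h1, h2⟩
  · exact h'
  · exact absurd h1 hu.1
  · exact absurd h1 hu.2

lemma xnot_int_init : ¬ xIsInt Rr G χ (χ.vMap Rr.init) := by
  rintro ⟨w, hw, hww⟩
  rcases χ.vInj w Rr.init hww with h' | ⟨h1, h2⟩ | ⟨h1, h2⟩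
  · exact hw.1 h'
  · exact hw.1 h1
  · exact hw.2 h1

lemma xnot_int_term : ¬ xIsInt Rr G χ (χ.vMap Rr.term) := by
  rintro ⟨w, hw, hww⟩
  rcases χ.vInj w Rr.term hww with h' | ⟨h1, h2⟩ | ⟨h1, h2⟩
  · exact hw.2 h'
  · exact hw.1 h1
  · exact hw.2 h1

lemma xnot_int_s {e : G.E} (he : ¬ xInIm Rr G χ e) : ¬ xIsInt Rr G χ (G.s e) := by
  rintro ⟨w, hw, hww⟩
  exact he (χ.full w hw.1 hw.2 e (Or.inl hww.symm))

lemma xnot_int_t {e : G.E} (he : ¬ xInIm Rr G χ e) : ¬ xIsInt Rr G χ (G.t e) := by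
  rintro ⟨w, hw, hww⟩
  exact he (χ.full w hw.1 hw.2 e (Or.inr hww.symm))

variable (Rr G χ)

/-- The contracted graph: collapse the image of `R` to a single edge. -/
def xG' : MultiDigraph where
  V := {v : G.V // ¬ xIsInt Rr G χ v}
  E := {e : G.E // ¬ xInIm Rr G χ e} ⊕ Unit
  s := fun e =>
    match e with
    | .inl p => ⟨G.s p.1, xnot_int_s p.2⟩
    | .inr _ => ⟨χ.vMap Rr.init, xnot_int_init⟩
  t := fun e =>
    match e with
    | .inl p => ⟨G.t p.1, xnot_int_t p.2⟩
    | .inr _ => ⟨χ.vMap Rr.term, xnot_int_term⟩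

/-- The edge of `xG'` to be expanded. -/
def xe₀ : (xG' Rr G χ).E := Sum.inr ()

/-- Forward vertex map of the graph pair diagram. -/
noncomputable def xvF (v : G.V) :
    (xG' Rr G χ).V ⊕ {v : Rr.R.V // v ≠ Rr.init ∧ v ≠ Rr.term} :=
  if h : xIsInt Rr G χ v then .inr ⟨h.choose, h.choose_spec.1⟩ else .inl ⟨v, h⟩

/-- Backward vertex map of the graph pair diagram. -/
def xvG (x : (xG' Rr G χ).V ⊕ {v : Rr.R.V // v ≠ Rr.init ∧ v ≠ Rr.term}) : G.V :=
  match x with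
  | .inl p => p.1
  | .inr w => χ.vMap w.1

variable {Rr G χ}

lemma xvF_pos {v : G.V} (h : xIsInt Rr G χ v) :
    xvF Rr G χ v = .inr ⟨h.choose, h.choose_spec.1⟩ := dif_pos h

lemma xvF_neg {v : G.V} (h : ¬ xIsInt Rr G χ v) :
    xvF Rr G χ v = .inl ⟨v, h⟩ := dif_neg h

variable (Rr G χ)

/-- The vertex equivalence of the graph pair diagram. -/
noncomputable def xvEquiv :
    G.V ≃ ((xG' Rr G χ).V ⊕ {v : Rr.R.V // v ≠ Rr.init ∧ v ≠ Rr.term}) where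
  toFun := xvF Rr G χ
  invFun := xvG Rr G χ
  left_inv := by
    intro v
    by_cases h : xIsInt Rr G χ v
    · rw [xvF_pos h]; exact h.choose_spec.2
    · rw [xvF_neg h]; rfl
  right_inv := by
    rintro (p | w)
    · show xvF Rr G χ p.1 = Sum.inl p
      rw [xvF_neg p.2]
      rfl
    · have hInt : xIsInt Rr G χ (χ.vMap w.1) := ⟨w.1, ⟨w.2.1, w.2.2⟩, rfl⟩
      show xvF Rr G χ (χ.vMap w.1) = _
      rw [xvF_pos hInt]
      congr 1
      exact Subtype.ext (xint_unique hInt.choose_spec.1 ⟨w.2.1, w.2.2⟩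
        hInt.choose_spec.2)

lemma xvEquiv_apply (v : G.V) : xvEquiv Rr G χ v = xvF Rr G χ v := rfl

/-- Forward edge map of the graph pair diagram. -/
noncomputable def xeF (e : G.E) :
    {e : (xG' Rr G χ).E // e ≠ xe₀ Rr G χ} ⊕ Rr.R.E :=
  if h : xInIm Rr G χ e then .inr h.choose
  else .inl ⟨.inl ⟨e, h⟩, fun hc => Sum.inl_ne_inr hc⟩

/-- Backward edge map of the graph pair diagram. -/
def xeG (x : {e : (xG' Rr G χ).E // e ≠ xe₀ Rr G χ} ⊕ Rr.R.E) : G.E :=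
  match x with
  | .inl ⟨.inl p, _⟩ => p.1
  | .inl ⟨.inr _, hne⟩ => absurd rfl hne
  | .inr ε => χ.eMap ε

variable {Rr G χ}

lemma xeF_pos {e : G.E} (h : xInIm Rr G χ e) :
    xeF Rr G χ e = .inr h.choose := dif_pos h

lemma xeF_neg {e : G.E} (h : ¬ xInIm Rr G χ e) :
    xeF Rr G χ e = .inl ⟨.inl ⟨e, h⟩, fun hc => Sum.inl_ne_inr hc⟩ := dif_neg h

variable (Rr G χ)

/-- The edge equivalence of the graph pair diagram. -/
noncomputable def xeEquiv :
    G.E ≃ ({e : (xG' Rr G χ).E // e ≠ xe₀ Rr G χ} ⊕ Rr.R.E) where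
  toFun := xeF Rr G χ
  invFun := xeG Rr G χ
  left_inv := by
    intro e
    by_cases h : xInIm Rr G χ e
    · rw [xeF_pos h]; exact h.choose_spec
    · rw [xeF_neg h]; rfl
  right_inv := by
    rintro (⟨p | u, hne⟩ | ε)
    · show xeF Rr G χ p.1 = Sum.inl ⟨Sum.inl p, hne⟩
      rw [xeF_neg p.2]
    · exact absurd rfl hne
    · have hIm : xInIm Rr G χ (χ.eMap ε) := ⟨ε, rfl⟩
      show xeF Rr G χ (χ.eMap ε) = _
      rw [xeF_pos hIm]
      congr 1
      exact χ.eInj hIm.choose_spec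

lemma xeEquiv_apply (e : G.E) : xeEquiv Rr G χ e = xeF Rr G χ e := rfl

lemma x_map_s (e : G.E) :
    (SimpleExpansion Rr (xG' Rr G χ) (xe₀ Rr G χ)).s (xeEquiv Rr G χ e)
      = xvEquiv Rr G χ (G.s e) := by
  rw [xeEquiv_apply, xvEquiv_apply]
  by_cases h : xInIm Rr G χ e
  · rw [xeF_pos h]
    have hse : G.s e = χ.vMap (Rr.R.s h.choose) := by
      conv_lhs => rw [← h.choose_spec]
      exact χ.map_s _
    by_cases h1 : Rr.R.s h.choose = Rr.init
    · have hL : (SimpleExpansion Rr (xG' Rr G χ) (xe₀ Rr G χ)).s (.inr h.choose)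
          = .inl ((xG' Rr G χ).s (xe₀ Rr G χ)) := by
        simp [SimpleExpansion, h1, Rr.ne, Rr.ne.symm]
      rw [hL, hse, h1, xvF_neg xnot_int_init]
      rfl
    · by_cases h2 : Rr.R.s h.choose = Rr.term
      · have hL : (SimpleExpansion Rr (xG' Rr G χ) (xe₀ Rr G χ)).s (.inr h.choose)
            = .inl ((xG' Rr G χ).t (xe₀ Rr G χ)) := by
          simp [SimpleExpansion, h1, h2, Rr.ne, Rr.ne.symm]
        rw [hL, hse, h2, xvF_neg xnot_int_term]
        rfl
      · have hL : (SimpleExpansion Rr (xG' Rr G χ) (xe₀ Rr G χ)).s (.inr h.choose)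
            = .inr ⟨Rr.R.s h.choose, h1, h2⟩ := by
          simp [SimpleExpansion, h1, h2, Rr.ne, Rr.ne.symm]
        have hInt : xIsInt Rr G χ (χ.vMap (Rr.R.s h.choose)) :=
          ⟨_, ⟨h1, h2⟩, rfl⟩
        rw [hL, hse, xvF_pos hInt]
        congr 1
        exact Subtype.ext (xint_unique ⟨h1, h2⟩ hInt.choose_spec.1
          hInt.choose_spec.2.symm)
  · rw [xeF_neg h]
    rw [xvF_neg (xnot_int_s h)]
    show Sum.inl ((xG' Rr G χ).s (.inl ⟨e, h⟩)) = _
    rfl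

lemma x_map_t (e : G.E) :
    (SimpleExpansion Rr (xG' Rr G χ) (xe₀ Rr G χ)).t (xeEquiv Rr G χ e)
      = xvEquiv Rr G χ (G.t e) := by
  rw [xeEquiv_apply, xvEquiv_apply]
  by_cases h : xInIm Rr G χ e
  · rw [xeF_pos h]
    have hse : G.t e = χ.vMap (Rr.R.t h.choose) := by
      conv_lhs => rw [← h.choose_spec]
      exact χ.map_t _
    by_cases h1 : Rr.R.t h.choose = Rr.init
    · have hL : (SimpleExpansion Rr (xG' Rr G χ) (xe₀ Rr G χ)).t (.inr h.choose)
          = .inl ((xG' Rr G χ).s (xe₀ Rr G χ)) := by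
        simp [SimpleExpansion, h1, Rr.ne, Rr.ne.symm]
      rw [hL, hse, h1, xvF_neg xnot_int_init]
      rfl
    · by_cases h2 : Rr.R.t h.choose = Rr.term
      · have hL : (SimpleExpansion Rr (xG' Rr G χ) (xe₀ Rr G χ)).t (.inr h.choose)
            = .inl ((xG' Rr G χ).t (xe₀ Rr G χ)) := by
          simp [SimpleExpansion, h1, h2, Rr.ne, Rr.ne.symm]
        rw [hL, hse, h2, xvF_neg xnot_int_term]
        rfl
      · have hL : (SimpleExpansion Rr (xG' Rr G χ) (xe₀ Rr G χ)).t (.inr h.choose)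
            = .inr ⟨Rr.R.t h.choose, h1, h2⟩ := by
          simp [SimpleExpansion, h1, h2, Rr.ne, Rr.ne.symm]
        have hInt : xIsInt Rr G χ (χ.vMap (Rr.R.t h.choose)) :=
          ⟨_, ⟨h1, h2⟩, rfl⟩
        rw [hL, hse, xvF_pos hInt]
        congr 1
        exact Subtype.ext (xint_unique ⟨h1, h2⟩ hInt.choose_spec.1
          hInt.choose_spec.2.symm)
  · rw [xeF_neg h]
    rw [xvF_neg (xnot_int_t h)]
    show Sum.inl ((xG' Rr G χ).t (.inl ⟨e, h⟩)) = _
    rfl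

/-- The simple contraction associated to a characteristic map. -/
noncomputable def xContraction : SimpleContraction Rr G where
  G' := xG' Rr G χ
  e₀ := xe₀ Rr G χ
  φ := ⟨xvEquiv Rr G χ, xeEquiv Rr G χ, x_map_s Rr G χ, x_map_t Rr G χ⟩

lemma xContraction_char : (xContraction Rr G χ).char = χ := by
  apply CharMap.ext'
  · funext v
    by_cases h1 : v = Rr.init
    · subst h1
      rw [char_vMap_init]
      show (xvEquiv Rr G χ).symm (.inl ((xG' Rr G χ).s (xe₀ Rr G χ)))
        = χ.vMap Rr.init
      rw [Equiv.symm_apply_eq, xvEquiv_apply, xvF_neg xnot_int_init]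
      rfl
    · by_cases h2 : v = Rr.term
      · subst h2
        rw [char_vMap_term]
        show (xvEquiv Rr G χ).symm (.inl ((xG' Rr G χ).t (xe₀ Rr G χ)))
          = χ.vMap Rr.term
        rw [Equiv.symm_apply_eq, xvEquiv_apply, xvF_neg xnot_int_term]
        rfl
      · rw [char_vMap_int _ v h1 h2]
        show (xvEquiv Rr G χ).symm (.inr ⟨v, h1, h2⟩) = χ.vMap v
        have hInt : xIsInt Rr G χ (χ.vMap v) := ⟨v, ⟨h1, h2⟩, rfl⟩
        rw [Equiv.symm_apply_eq, xvEquiv_apply, xvF_pos hInt]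
        congr 1
        exact Subtype.ext (xint_unique ⟨h1, h2⟩ hInt.choose_spec.1
          hInt.choose_spec.2.symm)
  · funext ε
    rw [char_eMap]
    show (xeEquiv Rr G χ).symm (.inr ε) = χ.eMap ε
    have hIm : xInIm Rr G χ (χ.eMap ε) := ⟨ε, rfl⟩
    rw [Equiv.symm_apply_eq, xeEquiv_apply, xeF_pos hIm]
    congr 1
    exact (χ.eInj hIm.choose_spec).symm

end Exist

/-- Every characteristic map of `R` into `G` is the characteristic
of some simple contraction with domain `X(G)`, and two simple contractions with
domain `X(G)` are range equivalent if and only if they have the same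
characteristic. -/
theorem stmt_14 (Rr : ReplacementRule) (G : MultiDigraph) :
    (∀ χ : CharMap Rr G, ∃ c : SimpleContraction Rr G, c.char = χ) ∧
    (∀ c₁ c₂ : SimpleContraction Rr G, RangeEquiv c₁ c₂ ↔ c₁.char = c₂.char) := by
  exact ⟨fun χ => ⟨xContraction Rr G χ, xContraction_char Rr G χ⟩,
    fun c₁ c₂ => ⟨st14_forward c₁ c₂, st14_backward c₁ c₂⟩⟩
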